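/- Let (X_i) be stationary with maximal correlation coefficients ρ(n). If Σ_{k≥1} ρ(k)/k < ∞, then Σ_{j≥0} ρ(2^j) < ∞; combined with the dyadic bound ||E(S_{2^{r+1}}|F₀)||_2 ≤ c Σ_{j=0}^{r} 2^{j/2} ρ(2^j), this yields Σ_{r≥0} ||E(S_{2^r}|F₀)||_2 / 2^{r/2} < ∞ and hence the Maxwell–Woodroofe condition Σ_{k≥1} ||E(S_k|F₀)||_2/k^{3/2} < ∞. -/

import Mathlib

open MeasureTheory ProbabilityTheory Finset

noncomputable section

lemma aux_mw (a : ℕ → ℝ) (ha0 : ∀ n, 0 ≤ a n) (ρ : ℕ → ℝ)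
    (hρ_anti : Antitone ρ) (hρ0 : ∀ n, 0 ≤ ρ n)
    (hsubadd : ∀ m' n : ℕ, a (m' + n) ≤ a m' + a n)
    (c : ℝ) (hc : 0 < c)
    (hdyad : ∀ r : ℕ, a (2 ^ (r + 1)) ≤
      c * ∑ j ∈ Finset.range (r + 1), (2 : ℝ) ^ ((j : ℝ) / 2) * ρ (2 ^ j))
    (hsum : Summable fun k : ℕ => ρ (k + 1) / ((k : ℝ) + 1)) :
    (Summable fun j : ℕ => ρ (2 ^ j)) ∧
    (Summable fun r : ℕ => a (2 ^ r) / (2 : ℝ) ^ ((r : ℝ) / 2)) ∧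
    (Summable fun k : ℕ => a (k + 1) / ((k : ℝ) + 1) ^ ((3 : ℝ) / 2)) := by
  -- Part 1 : condensation
  have hf : Summable (fun k : ℕ => ρ k / (k : ℝ)) := by
    rw [← summable_nat_add_iff 1]
    exact hsum.congr fun k => by push_cast; ring
  have h1 : Summable fun j : ℕ => ρ (2 ^ j) := by
    have h_nonneg : ∀ n : ℕ, 0 ≤ ρ n / (n : ℝ) :=
      fun n => div_nonneg (hρ0 n) (Nat.cast_nonneg n)
    have h_mono : ∀ ⦃m n : ℕ⦄, 0 < m → m ≤ n → ρ n / (n:ℝ) ≤ ρ m / (m:ℝ) := by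
      intro m n hm hmn
      have hm' : (0:ℝ) < (m:ℝ) := by exact_mod_cast hm
      exact div_le_div₀ (hρ0 m) (hρ_anti hmn) hm' (by exact_mod_cast hmn)
    have hcond := (summable_condensed_iff_of_nonneg h_nonneg h_mono).2 hf
    refine hcond.congr fun n => ?_
    have h2n : ((2:ℝ)) ^ n ≠ 0 := by positivity
    push_cast
    field_simp
  -- setup x = 2^{-1/2}
  set x : ℝ := (2 : ℝ) ^ (-(1:ℝ)/2) with hxdef
  have hx_pos : 0 < x := Real.rpow_pos_of_pos two_pos _
  have hx_lt : x < 1 := Real.rpow_lt_one_of_one_lt_of_neg one_lt_two (by norm_num)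
  have hxpow : ∀ n : ℕ, x ^ n = (2:ℝ) ^ (-(n:ℝ)/2) := by
    intro n
    rw [hxdef, ← Real.rpow_natCast ((2:ℝ) ^ (-(1:ℝ)/2)) n,
      ← Real.rpow_mul (by norm_num : (0:ℝ) ≤ 2)]
    congr 1; ring
  have hxinv : ∀ n : ℕ, x ^ n = ((2:ℝ) ^ ((n:ℝ)/2))⁻¹ := by
    intro n
    rw [hxpow, ← Real.rpow_neg (by norm_num : (0:ℝ) ≤ 2)]
    congr 1; ring
  have hgeom : Summable fun n : ℕ => x ^ n := summable_geometric_of_lt_one hx_pos.le hx_lt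
  have hgnorm : Summable fun n : ℕ => ‖x ^ n‖ :=
    hgeom.congr fun n => (Real.norm_of_nonneg (pow_nonneg hx_pos.le n)).symm
  -- Part 2
  have hb_norm : Summable fun j : ℕ => ‖ρ (2 ^ j)‖ :=
    h1.congr fun j => (Real.norm_of_nonneg (hρ0 _)).symm
  have hCP : Summable fun n : ℕ => ∑ k ∈ Finset.range (n+1), ρ (2 ^ k) * x ^ (n - k) := by
    have h := summable_norm_sum_mul_range_of_summable_norm hb_norm hgnorm
    refine h.congr fun n => ?_
    exact Real.norm_of_nonneg (Finset.sum_nonneg fun k _ =>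
      mul_nonneg (hρ0 _) (pow_nonneg hx_pos.le _))
  have key : ∀ r j : ℕ, j ≤ r → (2:ℝ)^((j:ℝ)/2) * x ^ (r+1) = x * x ^ (r - j) := by
    intro r j hjr
    rw [hxpow, hxpow, hxdef, ← Real.rpow_add two_pos, ← Real.rpow_add two_pos]
    congr 1
    have hrj : ((r - j : ℕ) : ℝ) = (r:ℝ) - (j:ℝ) := by
      push_cast [Nat.cast_sub hjr]; ring
    rw [hrj]; push_cast; ring
  have h2' : Summable fun r : ℕ => a (2 ^ (r+1)) * x ^ (r+1) := by
    refine Summable.of_nonneg_of_le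
      (fun r => mul_nonneg (ha0 _) (pow_nonneg hx_pos.le _)) (fun r => ?_)
      (hCP.mul_left (c * x))
    calc a (2 ^ (r+1)) * x ^ (r+1)
        ≤ (c * ∑ j ∈ Finset.range (r+1), (2:ℝ)^((j:ℝ)/2) * ρ (2^j)) * x ^ (r+1) :=
          mul_le_mul_of_nonneg_right (hdyad r) (pow_nonneg hx_pos.le _)
      _ = c * x * ∑ k ∈ Finset.range (r+1), ρ (2^k) * x ^ (r - k) := by
          simp only [Finset.mul_sum, Finset.sum_mul]
          refine Finset.sum_congr rfl fun j hj => ?_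
          have hjr : j ≤ r := Nat.lt_succ_iff.mp (Finset.mem_range.mp hj)
          linear_combination (c * ρ (2 ^ j)) * key r j hjr
  have h2x : Summable fun r : ℕ => a (2 ^ r) * x ^ r := (summable_nat_add_iff 1).1 h2'
  have h2 : Summable fun r : ℕ => a (2 ^ r) / (2:ℝ) ^ ((r:ℝ)/2) :=
    h2x.congr fun r => by rw [hxinv r]; exact (div_eq_mul_inv _ _).symm
  refine ⟨h1, h2, ?_⟩
  -- Part 3
  set T : ℕ → ℝ := fun r => ∑ j ∈ Finset.range (r+1), a (2 ^ j) with hT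
  have hT0 : ∀ r, 0 ≤ T r := fun r => Finset.sum_nonneg fun j _ => ha0 _
  have hTmono : ∀ r, T r ≤ T (r+1) := by
    intro r
    rw [hT]
    simp only [Finset.sum_range_succ]
    have := ha0 (2 ^ (r+1))
    linarith [Finset.sum_range_succ (fun j => a (2^j)) r]
  have hbin : ∀ r : ℕ, ∀ k : ℕ, 0 < k → k < 2 ^ (r+1) → a k ≤ T r := by
    intro r
    induction r with
    | zero =>
      intro k hk hk2
      interval_cases k
      simp [hT]
    | succ r ih =>
      intro k hk hk2
      rcases lt_or_ge k (2^(r+1)) with h | h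
      · exact (ih k hk h).trans (hTmono r)
      · rcases eq_or_lt_of_le h with heq | hlt
        · rw [← heq]
          rw [hT]
          exact Finset.single_le_sum (fun j _ => ha0 (2^j))
            (Finset.self_mem_range_succ (r+1))
        · have hpow : 2 ^ (r+2) = 2 ^ (r+1) + 2 ^ (r+1) := by ring
          have hm1 : 0 < k - 2^(r+1) := by omega
          have hm2 : k - 2^(r+1) < 2^(r+1) := by omega
          have hs : a k ≤ a (2^(r+1)) + a (k - 2^(r+1)) := by
            have := hsubadd (2^(r+1)) (k - 2^(r+1))
            rwa [Nat.add_sub_cancel' h] at this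
          have h2 := ih (k - 2^(r+1)) hm1 hm2
          have hTs : T (r+1) = T r + a (2^(r+1)) := by
            rw [hT]; exact Finset.sum_range_succ _ _
          linarith
  -- per-term bound via the dyadic logarithm
  have hlog : ∀ k : ℕ, a (k+1) / ((k:ℝ)+1) ^ ((3:ℝ)/2) ≤
      T (Nat.log 2 (k+1)) * x ^ (3 * Nat.log 2 (k+1)) := by
    intro k
    set r := Nat.log 2 (k+1) with hr
    have hub : a (k+1) ≤ T r :=
      hbin r (k+1) (Nat.succ_pos k) (Nat.lt_pow_succ_log_self one_lt_two (k+1))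
    have hlb : ((2:ℕ)^r : ℝ) ≤ (k:ℝ)+1 := by
      have := Nat.pow_log_le_self 2 (Nat.succ_ne_zero k)
      exact_mod_cast this
    have hden : (2:ℝ) ^ (((3*r : ℕ):ℝ)/2) ≤ ((k:ℝ)+1) ^ ((3:ℝ)/2) := by
      have hb : ((2:ℕ)^r : ℝ) = (2:ℝ) ^ ((r:ℝ)) := by
        push_cast
        rw [Real.rpow_natCast]
      calc (2:ℝ) ^ (((3*r : ℕ):ℝ)/2) = ((2:ℝ) ^ ((r:ℝ))) ^ ((3:ℝ)/2) := by
            rw [← Real.rpow_mul (by norm_num : (0:ℝ) ≤ 2)]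
            congr 1; push_cast; ring
        _ ≤ ((k:ℝ)+1) ^ ((3:ℝ)/2) := by
            apply Real.rpow_le_rpow (Real.rpow_nonneg (by norm_num) _) _ (by norm_num)
            rw [← hb]; exact hlb
    have hdpos : (0:ℝ) < (2:ℝ) ^ (((3*r : ℕ):ℝ)/2) := Real.rpow_pos_of_pos two_pos _
    calc a (k+1) / ((k:ℝ)+1) ^ ((3:ℝ)/2)
        ≤ T r / (2:ℝ) ^ (((3*r : ℕ):ℝ)/2) := div_le_div₀ (hT0 r) hub hdpos hden
      _ = T r * x ^ (3 * r) := by rw [hxinv (3*r), div_eq_mul_inv]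
  -- summability of r ↦ T r * x^r  (Cauchy product)
  have hfa : Summable fun j : ℕ => ‖a (2^j) * x ^ j‖ :=
    h2x.congr fun j =>
      (Real.norm_of_nonneg (mul_nonneg (ha0 _) (pow_nonneg hx_pos.le _))).symm
  have hG : Summable fun r : ℕ => T r * x ^ r := by
    have h := summable_norm_sum_mul_range_of_summable_norm hfa hgnorm
    refine h.congr fun r => ?_
    rw [Real.norm_of_nonneg (Finset.sum_nonneg fun k _ =>
        mul_nonneg (mul_nonneg (ha0 _) (pow_nonneg hx_pos.le _)) (pow_nonneg hx_pos.le _)),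
      hT, Finset.sum_mul]
    refine Finset.sum_congr rfl fun j hj => ?_
    have hjr : j ≤ r := Nat.lt_succ_iff.mp (Finset.mem_range.mp hj)
    rw [mul_assoc, ← pow_add, Nat.add_sub_cancel' hjr]
  have hx3 : ∀ r : ℕ, ((2:ℕ)^r : ℝ) * (T r * x ^ (3*r)) = T r * x ^ r := by
    intro r
    have hx2 : x^2 = 2⁻¹ := by
      rw [hxpow 2, show (-((2:ℕ):ℝ)/2) = -1 by push_cast; ring,
        Real.rpow_neg (by norm_num : (0:ℝ) ≤ 2), Real.rpow_one]
    have : x ^ (3*r) = (x^2)^r * x^r := by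
      rw [← pow_mul, ← pow_add]
      congr 1; ring
    rw [this, hx2, inv_pow]
    have h2r : ((2:ℝ)^r) ≠ 0 := by positivity
    push_cast
    field_simp
  -- final comparison of partial sums
  refine summable_of_sum_range_le
    (c := ∑' r, T r * x ^ r)
    (fun k => div_nonneg (ha0 _) (Real.rpow_nonneg (by positivity) _)) fun N => ?_
  classical
  set L : ℕ → ℕ := fun k => Nat.log 2 (k+1) with hL
  have hcard : ∀ r : ℕ, #{k ∈ Finset.range N | L k = r} ≤ 2 ^ r := by
    intro r
    have hsub : {k ∈ Finset.range N | L k = r} ⊆ Finset.Ico (2^r - 1) (2^(r+1) - 1) := by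
      intro k hk
      simp only [Finset.mem_filter, Finset.mem_range] at hk
      obtain ⟨-, hkr⟩ := hk
      have h1' : 2 ^ r ≤ k + 1 := by
        rw [← hkr]; exact Nat.pow_log_le_self 2 (Nat.succ_ne_zero k)
      have h2' : k + 1 < 2 ^ (r+1) := by
        rw [← hkr]; exact Nat.lt_pow_succ_log_self one_lt_two (k+1)
      simp only [Finset.mem_Ico]
      omega
    calc #{k ∈ Finset.range N | L k = r} ≤ #(Finset.Ico (2^r - 1) (2^(r+1) - 1)) :=
          Finset.card_le_card hsub
      _ ≤ 2 ^ r := by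
          rw [Nat.card_Ico]
          have h1 : 2 ^ (r+1) = 2 ^ r + 2 ^ r := by ring
          have h2 : 1 ≤ 2 ^ r := Nat.one_le_two_pow
          omega
  calc ∑ k ∈ Finset.range N, a (k+1) / ((k:ℝ)+1) ^ ((3:ℝ)/2)
      ≤ ∑ k ∈ Finset.range N, T (L k) * x ^ (3 * L k) :=
        Finset.sum_le_sum fun k _ => hlog k
    _ = ∑ r ∈ (Finset.range N).image L,
          #{k ∈ Finset.range N | L k = r} • (T r * x ^ (3 * r)) :=
        Finset.sum_comp (fun r => T r * x ^ (3 * r)) L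
    _ ≤ ∑ r ∈ (Finset.range N).image L, T r * x ^ r := by
        refine Finset.sum_le_sum fun r _ => ?_
        rw [nsmul_eq_mul, ← hx3 r]
        apply mul_le_mul_of_nonneg_right _ (mul_nonneg (hT0 r) (pow_nonneg hx_pos.le _))
        exact_mod_cast hcard r
    _ ≤ ∑' r, T r * x ^ r :=
        Summable.sum_le_tsum _ (fun r _ => mul_nonneg (hT0 r) (pow_nonneg hx_pos.le _)) hG


/-- If `Σ ρ(k)/k < ∞` then `Σ_j ρ(2^j) < ∞`; combined with the dyadic bound
`‖E(S_{2^{r+1}}|F₀)‖₂ ≤ c Σ_{j=0}^r 2^{j/2} ρ(2^j)` and subadditivity of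
`n ↦ ‖E(S_n|F₀)‖₂`, this yields `Σ_r ‖E(S_{2^r}|F₀)‖₂/2^{r/2} < ∞` and hence
the Maxwell–Woodroofe condition `Σ_k ‖E(S_k|F₀)‖₂/k^{3/2} < ∞`. -/
theorem stmt7 {Ω : Type*} [m : MeasurableSpace Ω] (μ : Measure Ω) [IsProbabilityMeasure μ]
    (F₀ : MeasurableSpace Ω) (hF₀ : F₀ ≤ m)
    (S : ℕ → Ω → ℝ)
    (ρ : ℕ → ℝ) (hρ_anti : Antitone ρ) (hρ_mem : ∀ n, ρ n ∈ Set.Icc (0 : ℝ) 1)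
    (hsubadd : ∀ m' n : ℕ, (eLpNorm (μ[S (m' + n)|F₀]) 2 μ).toReal ≤
      (eLpNorm (μ[S m'|F₀]) 2 μ).toReal + (eLpNorm (μ[S n|F₀]) 2 μ).toReal)
    (c : ℝ) (hc : 0 < c)
    (hdyadbound : ∀ r : ℕ, (eLpNorm (μ[S (2 ^ (r + 1))|F₀]) 2 μ).toReal ≤
      c * ∑ j ∈ Finset.range (r + 1), (2 : ℝ) ^ ((j : ℝ) / 2) * ρ (2 ^ j))
    (hsum : Summable fun k : ℕ => ρ (k + 1) / ((k : ℝ) + 1)) :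
    (Summable fun j : ℕ => ρ (2 ^ j)) ∧
    (Summable fun r : ℕ =>
      (eLpNorm (μ[S (2 ^ r)|F₀]) 2 μ).toReal / (2 : ℝ) ^ ((r : ℝ) / 2)) ∧
    (Summable fun k : ℕ =>
      (eLpNorm (μ[S (k + 1)|F₀]) 2 μ).toReal / ((k : ℝ) + 1) ^ ((3 : ℝ) / 2)) := by
  exact aux_mw (fun n => (eLpNorm (μ[S n|F₀]) 2 μ).toReal) (fun n => ENNReal.toReal_nonneg)
    ρ hρ_anti (fun n => (hρ_mem n).1) hsubadd c hc hdyadbound hsum
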